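/- Let K be a number field of degree k, p a rational prime, and a ∈ O_K a nonzero algebraic integer all of whose archimedean absolute values are at most 2√p. If p > 2^{2k}, then the sum Σ_{i : e_i > 0} f_i ≤ k/2, where a·O_K = ℘_1^{e_1}···℘_m^{e_m}·I is the factorization with ℘_i the primes over p of residue degrees f_i, and I coprime to p. -/

import Mathlib

set_option synthInstance.maxHeartbeats 1000000
set_option maxHeartbeats 1000000


open NumberField

theorem product_formula_bound (K : Type) [Field K] [NumberField K]
    (p : ℕ) (hp : p.Prime) (a : 𝓞 K) (ha : a ≠ 0)
    (harch : ∀ v : InfinitePlace K, v (algebraMap (𝓞 K) K a) ≤ 2 * Real.sqrt p)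
    (hbig : 2 ^ (2 * Module.finrank ℚ K) < p)
    (s : Finset (Ideal (𝓞 K)))
    (hs : ∀ P ∈ s, P.IsPrime ∧ (p : 𝓞 K) ∈ P ∧ a ∈ P) :
    2 * ∑ P ∈ s, Ideal.inertiaDeg' (Ideal.span {(p : ℤ)}) P ≤
      Module.finrank ℚ K := by
  classical
  haveI : Fact p.Prime := ⟨hp⟩
  set k := Module.finrank ℚ K with hk
  set F := ∑ P ∈ s, Ideal.inertiaDeg' (Ideal.span {(p : ℤ)}) P with hF
  have hpz : (p : 𝓞 K) ≠ 0 := by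
    exact_mod_cast Nat.cast_ne_zero.mpr hp.ne_zero
  haveI hspan_max : (Ideal.span {(p : ℤ)}).IsMaximal := by
    exact PrincipalIdealRing.isMaximal_of_irreducible
      ((Int.prime_iff_natAbs_prime.mpr (by simpa using hp)).irreducible)
  -- each P in s is a nonzero maximal ideal
  have hPbot : ∀ P ∈ s, P ≠ ⊥ := by
    intro P hP hbot
    exact hpz (by simpa [hbot] using (hs P hP).2.1)
  have hPmax : ∀ P ∈ s, P.IsMaximal := fun P hP =>
    Ideal.IsPrime.isMaximal (hs P hP).1 (hPbot P hP)
  -- absNorm P = p ^ f P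
  have key : ∀ P ∈ s, Ideal.absNorm P
      = p ^ Ideal.inertiaDeg' (Ideal.span {(p : ℤ)}) P := by
    intro P hP
    obtain ⟨hPprime, hpmem, -⟩ := hs P hP
    have hcomap : Ideal.comap (algebraMap ℤ (𝓞 K)) P = Ideal.span {(p : ℤ)} := by
      refine (hspan_max.eq_of_le (fun h => hPprime.ne_top ?_) ?_).symm
      · rw [Ideal.eq_top_iff_one] at h ⊢
        simpa using Ideal.mem_comap.mp h
      · rw [Ideal.span_le]
        simp only [Set.singleton_subset_iff, SetLike.mem_coe, Ideal.mem_comap]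
        simpa using hpmem
    haveI : P.LiesOver (Ideal.span {(p : ℤ)}) := ⟨hcomap.symm⟩
    have hfr : Ideal.inertiaDeg' (Ideal.span {(p : ℤ)}) P
        = Module.finrank (ℤ ⧸ Ideal.span {(p : ℤ)}) ((𝓞 K) ⧸ P) :=
      Ideal.inertiaDeg'_algebraMap _ _
    letI := @Fintype.ofFinite _ (Ideal.finiteQuotientOfFreeOfNeBot P (hPbot P hP))
    have e : (ℤ ⧸ Ideal.span {(p : ℤ)}) ≃+* ZMod p :=
      (Int.quotientSpanNatEquivZMod p)
    letI : Fintype (ℤ ⧸ Ideal.span {(p : ℤ)}) := Fintype.ofEquiv (ZMod p) e.symm.toEquiv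
    letI : Field (ℤ ⧸ Ideal.span {(p : ℤ)}) := Ideal.Quotient.field _
    have hcard : Fintype.card (ℤ ⧸ Ideal.span {(p : ℤ)}) = p := by
      rw [← Nat.card_eq_fintype_card, Nat.card_congr e.toEquiv, Nat.card_zmod]
    have := Module.card_eq_pow_finrank (K := ℤ ⧸ Ideal.span {(p : ℤ)}) (V := (𝓞 K) ⧸ P)
    rw [hcard] at this
    rw [Ideal.absNorm_apply, Submodule.cardQuot_apply, Nat.card_eq_fintype_card, this, hfr]
  -- the product of the primes divides span {a}
  have hdvd : (∏ P ∈ s, P) ∣ Ideal.span {a} := by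
    refine Finset.prod_dvd_of_coprime ?_ (fun P hP => Ideal.dvd_span_singleton.mpr (hs P hP).2.2)
    intro P hP Q hQ hne
    exact (Ideal.isCoprime_iff_sup_eq).mpr
      ((hPmax P hP).coprime_of_ne (hPmax Q hQ) hne)
  have hNdvd : p ^ F ∣ Ideal.absNorm (Ideal.span {a}) := by
    have := map_dvd Ideal.absNorm hdvd
    rwa [map_prod, Finset.prod_congr rfl key, Finset.prod_pow_eq_pow_sum] at this
  have hNne : Ideal.absNorm (Ideal.span {a}) ≠ 0 := by
    rw [Ne, Ideal.absNorm_eq_zero_iff, Ideal.span_singleton_eq_bot]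
    exact ha
  have hle1 : p ^ F ≤ Ideal.absNorm (Ideal.span {a}) :=
    Nat.le_of_dvd (Nat.pos_of_ne_zero hNne) hNdvd
  -- archimedean bound on the norm
  have harchbound : (Ideal.absNorm (Ideal.span {a}) : ℝ) ≤ (2 * Real.sqrt p) ^ k := by
    have h1 : (Ideal.absNorm (Ideal.span {a}) : ℝ)
        = |Algebra.norm ℚ ((algebraMap (𝓞 K) K) a)| := by
      rw [Ideal.absNorm_span_singleton, ← Algebra.coe_norm_int a, Nat.cast_natAbs]
      push_cast
      ring
    rw [h1, ← NumberField.InfinitePlace.prod_eq_abs_norm]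
    calc ∏ v : InfinitePlace K, v ((algebraMap (𝓞 K) K) a) ^ v.mult
        ≤ ∏ v : InfinitePlace K, (2 * Real.sqrt p) ^ v.mult := by
          refine Finset.prod_le_prod (fun v _ => by positivity)
            (fun v _ => pow_le_pow_left₀ (by positivity) (harch v) _)
      _ = (2 * Real.sqrt p) ^ k := by
          rw [Finset.prod_pow_eq_pow_sum, NumberField.InfinitePlace.sum_mult_eq]
  -- combine
  have hreal : ((p : ℝ)) ^ F ≤ (2 * Real.sqrt p) ^ k := by
    calc ((p : ℝ)) ^ F = ((p ^ F : ℕ) : ℝ) := by push_cast; ring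
      _ ≤ (Ideal.absNorm (Ideal.span {a}) : ℝ) := by exact_mod_cast hle1
      _ ≤ _ := harchbound
  -- square both sides
  have hsq : ((p : ℝ)) ^ (2 * F) ≤ (2:ℝ) ^ (2 * k) * (p:ℝ) ^ k := by
    have hnn : (0:ℝ) ≤ ((p : ℝ)) ^ F := by positivity
    calc ((p : ℝ)) ^ (2 * F) = (((p : ℝ)) ^ F) ^ 2 := by
          rw [← pow_mul, mul_comm]
      _ ≤ ((2 * Real.sqrt p) ^ k) ^ 2 := pow_le_pow_left₀ hnn hreal 2
      _ = ((2 * Real.sqrt p) ^ 2) ^ k := by rw [← pow_mul, mul_comm k 2, pow_mul]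
      _ = (4 * (p:ℝ)) ^ k := by
          rw [mul_pow, Real.sq_sqrt (by positivity)]; norm_num
      _ = (2:ℝ) ^ (2 * k) * (p:ℝ) ^ k := by
          rw [mul_pow, show (4:ℝ) = 2 ^ 2 by norm_num, ← pow_mul]
  have hnat : p ^ (2 * F) ≤ 2 ^ (2 * k) * p ^ k := by exact_mod_cast hsq
  have hlt : p ^ (2 * F) < p ^ (k + 1) := by
    calc p ^ (2 * F) ≤ 2 ^ (2 * k) * p ^ k := hnat
      _ < p * p ^ k := (Nat.mul_lt_mul_right (pow_pos hp.pos k)).mpr hbig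
      _ = p ^ (k + 1) := by ring
  have hfin := (Nat.pow_lt_pow_iff_right hp.one_lt).mp hlt
  omega
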